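/- Let R be a collection of subsets of {1,...,m} closed under unions and intersections, let I_A ∈ R, I_N its complement, and for any S ⊆ {1,...,m} let S̄ denote the smallest element of R containing S. Then for any S ⊆ {1,...,m}, S̄ ∩ I_N ⊆ (S ∩ I_N)̄, i.e. the closure of S intersected with I_N is contained in the closure of S∩I_N. -/
import Mathlib


open Finset

lemma inf_mem_of_closed {m : ℕ} (R : Finset (Finset (Fin m)))
    (hinter : ∀ A ∈ R, ∀ B ∈ R, A ∩ B ∈ R)
    (F : Finset (Finset (Fin m))) (hF : F ⊆ R) (hne : F.Nonempty) :
    F.inf id ∈ R := by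
  induction hne using Finset.Nonempty.cons_induction with
  | singleton a => simpa using hF (by simp)
  | cons a s ha hs ih =>
    rw [Finset.inf_cons]
    exact hinter a (hF (by simp)) _ (ih (fun x hx => hF (by simp [hx])))

theorem closure_inter_nulls_subset {m : ℕ} (R : Finset (Finset (Fin m)))
    (hunion : ∀ A ∈ R, ∀ B ∈ R, A ∪ B ∈ R)
    (hinter : ∀ A ∈ R, ∀ B ∈ R, A ∩ B ∈ R)
    (huniv : Finset.univ ∈ R)
    (IA : Finset (Fin m)) (hIA : IA ∈ R)
    (cl : Finset (Fin m) → Finset (Fin m))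
    (hcl : ∀ S : Finset (Fin m), cl S = (R.filter (fun T => S ⊆ T)).inf id)
    (S : Finset (Fin m)) :
    cl S ∩ (Finset.univ \ IA) ⊆ cl (S ∩ (Finset.univ \ IA)) := by
  let IN := (Finset.univ \ IA : Finset (Fin m))
  let T := S ∩ IN
  show cl S ∩ IN ⊆ cl T
  -- cl T ∈ R and T ⊆ cl T
  have hfilt : R.filter (fun U => T ⊆ U) ⊆ R := Finset.filter_subset _ _
  have hne : (R.filter (fun U => T ⊆ U)).Nonempty :=
    ⟨Finset.univ, by simp [huniv]⟩
  have hclT_mem : cl T ∈ R := by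
    rw [hcl]; exact inf_mem_of_closed R hinter _ hfilt hne
  have hT_sub : T ⊆ cl T := by
    rw [hcl, ← Finset.le_iff_subset]
    apply Finset.le_inf
    intro U hU
    exact (Finset.mem_filter.mp hU).2
  -- IA ∪ cl T ∈ R and contains S
  have hmem : IA ∪ cl T ∈ R := hunion _ hIA _ hclT_mem
  have hSsub : S ⊆ IA ∪ cl T := by
    intro x hx
    by_cases hxA : x ∈ IA
    · exact Finset.mem_union_left _ hxA
    · exact Finset.mem_union_right _ (hT_sub (show x ∈ S ∩ (Finset.univ \ IA) from Finset.mem_inter.mpr ⟨hx, Finset.mem_sdiff.mpr ⟨Finset.mem_univ x, hxA⟩⟩))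
  have hclS : cl S ⊆ IA ∪ cl T := by
    rw [hcl, ← Finset.le_iff_subset]
    exact Finset.inf_le (Finset.mem_filter.mpr ⟨hmem, hSsub⟩)
  intro x hx
  simp only [Finset.mem_inter] at hx
  rcases Finset.mem_union.mp (hclS hx.1) with h | h
  · exact absurd h (Finset.mem_sdiff.mp hx.2).2
  · exact h
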